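/- The height of a cost-optimal basic tree representing a displacement sequence of length n is O(log n); precisely, on any leaf-to-root path, the length of the flattened sequence at least doubles with at least every other node, so the height is at most 2·log₂ n + O(1). -/

import Mathlib

inductive TT : Type where
  | con : ℕ → TT
  | vec : ℕ → ℤ → TT → TT
  | idx : List ℤ → TT → TT
  | strc : List (ℤ × TT) → TT

theorem TT.sizeOf_snd_lt {ps : List (ℤ × TT)} (p : {x // x ∈ ps}) :
    sizeOf (p.1).2 < sizeOf (TT.strc ps) := by
  obtain ⟨⟨a, b⟩, hp⟩ := p
  have := List.sizeOf_lt_of_mem hp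
  simp at this ⊢
  omega

def flatten : TT → List ℤ
  | .con c => (List.range c).map (fun i => (i : ℤ))
  | .vec c d C => (List.range c).flatMap (fun i => (flatten C).map (· + (i : ℤ) * d))
  | .idx I C => I.flatMap (fun s => (flatten C).map (· + s))
  | .strc ps => ps.attach.flatMap (fun p => (flatten p.1.2).map (· + p.1.1))
decreasing_by
  all_goals first
  | exact TT.sizeOf_snd_lt _
  | decreasing_tactic

def cost (kc kv ki ks kl : ℕ) : TT → ℕ
  | .con _ => kc
  | .vec _ _ C => kv + cost kc kv ki ks kl C
  | .idx I C => ki + I.length * kl + cost kc kv ki ks kl C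
  | .strc ps => ks + 2 * ps.length * kl + (ps.attach.map (fun p => cost kc kv ki ks kl p.1.2)).sum
decreasing_by
  all_goals first
  | exact TT.sizeOf_snd_lt _
  | decreasing_tactic

/-- Height of a type tree (a single node has height 1). -/
def height : TT → ℕ
  | .con _ => 1
  | .vec _ _ C => height C + 1
  | .idx _ C => height C + 1
  | .strc ps => (ps.attach.map (fun p => height p.1.2)).foldr max 0 + 1
decreasing_by
  all_goals first
  | exact TT.sizeOf_snd_lt _
  | decreasing_tactic

/-- `T` is a cost-optimal basic tree representing `D`
(cost model: all node constants equal to `K`, lookup cost 1). -/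
def Optimal (K : ℕ) (D : List ℤ) (T : TT) : Prop :=
  flatten T = D ∧ ∀ T' : TT, flatten T' = D → cost K K K K 1 T ≤ cost K K K K 1 T'

section Aux

def LocOpt (K : ℕ) (T : TT) : Prop :=
  ∀ T', flatten T' = flatten T → cost K K K K 1 T ≤ cost K K K K 1 T'

lemma attach_map_snd {α : Type} (ps : List (ℤ × TT)) (f : TT → α) :
    ps.attach.map (fun p => f p.1.2) = ps.map (fun p => f p.2) :=
  List.attach_map_val (l := ps) (f := fun p => f p.2)

lemma attach_flatMap_snd {α : Type} (ps : List (ℤ × TT)) (f : ℤ × TT → List α) :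
    ps.attach.flatMap (fun p => f p.1) = ps.flatMap f := by
  conv_rhs => rw [← List.attach_map_subtype_val ps]
  rw [List.flatMap_map]

lemma flatten_strc (ps : List (ℤ × TT)) :
    flatten (.strc ps) = ps.flatMap (fun p => (flatten p.2).map (· + p.1)) := by
  rw [flatten]
  exact attach_flatMap_snd ps (fun p => (flatten p.2).map (· + p.1))

lemma cost_strc (K : ℕ) (ps : List (ℤ × TT)) :
    cost K K K K 1 (.strc ps) = K + 2 * ps.length + (ps.map (fun p => cost K K K K 1 p.2)).sum := by
  rw [cost, attach_map_snd]; ring_nf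

lemma height_strc (ps : List (ℤ × TT)) :
    height (.strc ps) = (ps.map (fun p => height p.2)).foldr max 0 + 1 := by
  rw [height, attach_map_snd]

lemma flatten_con_zero : flatten (.con 0) = [] := by rw [flatten]; simp

lemma cost_con (K c : ℕ) : cost K K K K 1 (.con c) = K := by rw [cost]

lemma K_le_cost (K : ℕ) (T : TT) : K ≤ cost K K K K 1 T := by
  cases T <;> rw [cost] <;> omega

lemma length_flatten_vec (c : ℕ) (d : ℤ) (C : TT) :
    (flatten (.vec c d C)).length = c * (flatten C).length := by
  rw [flatten]
  simp [List.length_flatMap, Function.comp_def, List.map_const', mul_comm]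

lemma length_flatten_idx (I : List ℤ) (C : TT) :
    (flatten (.idx I C)).length = I.length * (flatten C).length := by
  rw [flatten]
  simp [List.length_flatMap, Function.comp_def, List.map_const', mul_comm]

lemma length_flatten_strc (ps : List (ℤ × TT)) :
    (flatten (.strc ps)).length = (ps.map (fun p => (flatten p.2).length)).sum := by
  rw [flatten_strc]
  simp [List.length_flatMap, Function.comp_def]

lemma flatten_vec_one (d : ℤ) (C : TT) : flatten (.vec 1 d C) = flatten C := by
  rw [flatten]
  simp [List.range_succ]

lemma flatten_idx_single (s : ℤ) (C : TT) :
    flatten (.idx [s] C) = (flatten C).map (· + s) := by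
  rw [flatten]; simp

lemma locopt_vec (K : ℕ) {c : ℕ} {d : ℤ} {C : TT} (h : LocOpt K (.vec c d C)) :
    LocOpt K C := by
  intro C' hC'
  have := h (.vec c d C') (by rw [flatten, flatten, hC'])
  rw [cost, cost] at this
  omega

lemma locopt_idx (K : ℕ) {I : List ℤ} {C : TT} (h : LocOpt K (.idx I C)) :
    LocOpt K C := by
  intro C' hC'
  have := h (.idx I C') (by rw [flatten, flatten, hC'])
  rw [cost, cost] at this
  omega

lemma locopt_strc (K : ℕ) {ps : List (ℤ × TT)} (h : LocOpt K (.strc ps))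
    {s : ℤ} {C : TT} (hmem : (s, C) ∈ ps) : LocOpt K C := by
  obtain ⟨l, r, rfl⟩ := List.append_of_mem hmem
  intro C' hC'
  have := h (.strc (l ++ (s, C') :: r)) (by
    rw [flatten_strc, flatten_strc]
    simp [hC'])
  rw [cost_strc, cost_strc] at this
  simp at this
  omega

lemma log_step {m n : ℕ} (hm : 1 ≤ m) (h : 2 * m ≤ n) :
    Nat.log 2 m + 1 ≤ Nat.log 2 n := by
  calc Nat.log 2 m + 1 = Nat.log 2 (m * 2) :=
        (Nat.log_mul_base (by norm_num) (by omega)).symm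
    _ ≤ Nat.log 2 n := Nat.log_mono_right (by omega)

lemma foldr_max_le {l : List ℕ} {B : ℕ} (h : ∀ x ∈ l, x ≤ B) :
    l.foldr max 0 ≤ B := by
  induction l with
  | nil => simp
  | cons a l ih =>
      simp only [List.foldr_cons]
      exact max_le (h a (by simp)) (ih fun x hx => h x (by simp [hx]))

def Strong : TT → Prop
  | .idx I _ => I.length ≠ 1
  | .strc _ => False
  | _ => True

end Aux

theorem main_bound (K : ℕ) (hK : 0 < K) : ∀ T : TT, LocOpt K T →
    height T ≤ 2 * Nat.log 2 (flatten T).length + 2 ∧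
    (Strong T → height T ≤ 2 * Nat.log 2 (flatten T).length + 1)
  | .con c, _ => by
      rw [height]
      exact ⟨by omega, fun _ => by omega⟩
  | .vec c d C, h => by
      have hC : LocOpt K C := locopt_vec K h
      have hn := length_flatten_vec c d C
      have hKc := K_le_cost K C
      have hne : c * (flatten C).length ≠ 0 := by
        intro h0
        have h1 : flatten (.vec c d C) = [] := List.length_eq_zero_iff.mp (by omega)
        have h2 := h (.con 0) (by rw [flatten_con_zero, h1])
        rw [cost_con] at h2
        rw [cost] at h2
        omega
      obtain ⟨hc0, hm⟩ := Nat.mul_ne_zero_iff.mp hne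
      have hc1 : c ≠ 1 := by
        rintro rfl
        have := h C (flatten_vec_one d C).symm
        rw [cost] at this
        omega
      have hc : 2 ≤ c := by omega
      obtain ⟨hb, -⟩ := main_bound K hK C hC
      have hlog : Nat.log 2 (flatten C).length + 1 ≤ Nat.log 2 (c * (flatten C).length) :=
        log_step (by omega) (Nat.mul_le_mul_right _ hc)
      rw [height, hn]
      exact ⟨by omega, fun _ => by omega⟩
  | .idx I C, h => by
      have hC : LocOpt K C := locopt_idx K h
      have hn := length_flatten_idx I C
      have hKc := K_le_cost K C
      have hne : I.length * (flatten C).length ≠ 0 := by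
        intro h0
        have h1 : flatten (.idx I C) = [] := List.length_eq_zero_iff.mp (by omega)
        have h2 := h (.con 0) (by rw [flatten_con_zero, h1])
        rw [cost_con] at h2
        rw [cost] at h2
        omega
      obtain ⟨hI0, hm⟩ := Nat.mul_ne_zero_iff.mp hne
      rcases Nat.lt_or_ge I.length 2 with hI2 | hI2
      · -- singleton index list
        have hI1 : I.length = 1 := by omega
        obtain ⟨s, rfl⟩ := List.length_eq_one_iff.mp hI1
        have hstr : Strong C := by
          match C, hC with
          | .con _, _ => trivial
          | .vec _ _ _, _ => trivial
          | .idx J C', _ =>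
            show J.length ≠ 1
            intro hJ
            obtain ⟨t, rfl⟩ := List.length_eq_one_iff.mp hJ
            have heq : flatten (.idx [t + s] C') = flatten (.idx [s] (.idx [t] C')) := by
              rw [flatten_idx_single, flatten_idx_single, flatten_idx_single, List.map_map]
              simp [Function.comp_def, add_assoc]
            have := h _ heq
            simp only [cost, List.length_singleton] at this
            omega
          | .strc qs, _ =>
            exfalso
            have heq : flatten (.strc (qs.map (fun q => (q.1 + s, q.2)))) =
                flatten (.idx [s] (.strc qs)) := by
              rw [flatten_strc, flatten_idx_single, flatten_strc, List.flatMap_map,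
                List.map_flatMap]
              simp [List.map_map, Function.comp_def, add_assoc]
            have := h _ heq
            simp only [cost, List.length_singleton, attach_map_snd, List.map_map,
              List.length_map, Function.comp_def] at this
            omega
        obtain ⟨-, hsb⟩ := main_bound K hK C hC
        have hb := hsb hstr
        simp at hn
        rw [height, hn]
        refine ⟨by omega, fun hs => ?_⟩
        exact absurd rfl hs
      · obtain ⟨hb, -⟩ := main_bound K hK C hC
        have hlog : Nat.log 2 (flatten C).length + 1 ≤
            Nat.log 2 (I.length * (flatten C).length) :=
          log_step (by omega) (Nat.mul_le_mul_right _ hI2)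
        rw [height, hn]
        exact ⟨by omega, fun _ => by omega⟩
  | .strc ps, h => by
      have hn := length_flatten_strc ps
      rw [height_strc]
      have key : ∀ x ∈ ps.map (fun p => height p.2),
          x ≤ 2 * Nat.log 2 (flatten (.strc ps)).length + 1 := by
        intro x hx
        rw [List.mem_map] at hx
        obtain ⟨⟨s, C⟩, hmem, rfl⟩ := hx
        have hC : LocOpt K C := locopt_strc K h hmem
        have hle : (flatten C).length ≤ (flatten (.strc ps)).length := by
          rw [hn]
          exact List.single_le_sum (fun _ _ => Nat.zero_le _) _
            (List.mem_map_of_mem hmem)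
        have hlog := Nat.log_mono_right (b := 2) hle
        obtain ⟨l, r, hps⟩ := List.append_of_mem hmem
        have hstr : Strong C := by
          subst hps
          match C, hC with
          | .con _, _ => trivial
          | .vec _ _ _, _ => trivial
          | .idx J C', _ =>
            show J.length ≠ 1
            intro hJ
            obtain ⟨t, rfl⟩ := List.length_eq_one_iff.mp hJ
            have heq : flatten (.strc (l ++ (t + s, C') :: r)) =
                flatten (.strc (l ++ (s, .idx [t] C') :: r)) := by
              rw [flatten_strc, flatten_strc]
              simp [flatten_idx_single, List.map_map, Function.comp_def, add_assoc]
            have := h _ heq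
            simp only [cost, List.length_singleton, attach_map_snd, List.map_append,
              List.map_cons, List.sum_append, List.sum_cons, List.length_append,
              List.length_cons] at this
            omega
          | .strc qs, _ =>
            exfalso
            have hKq := K_le_cost K (.strc qs)
            have heq : flatten (.strc (l ++ qs.map (fun q => (q.1 + s, q.2)) ++ r)) =
                flatten (.strc (l ++ (s, .strc qs) :: r)) := by
              rw [flatten_strc, flatten_strc]
              simp only [List.flatMap_append, List.flatMap_cons, List.flatMap_map,
                flatten_strc, List.map_flatMap, List.map_map, Function.comp_def]
              simp [add_assoc]
            have := h _ heq
            simp only [cost, attach_map_snd, List.map_append, List.map_cons,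
              List.sum_append, List.sum_cons, List.length_append, List.length_cons,
              List.length_map, List.map_map, Function.comp_def] at this
            omega
        have hb := (main_bound K hK C hC).2 hstr
        show height C ≤ 2 * Nat.log 2 (flatten (.strc ps)).length + 1
        omega
      have hfold := foldr_max_le key
      refine ⟨by omega, fun hs => ?_⟩
      exact hs.elim
termination_by T => sizeOf T
decreasing_by
  all_goals first
  | decreasing_tactic
  | (have hh := List.sizeOf_lt_of_mem hmem; simp at hh ⊢; omega)


/-- The height of a cost-optimal basic tree representing a displacement sequence of
length `n` is at most `2 * log₂ n + O(1)`. -/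
theorem stmt9 (K : ℕ) (hK : 0 < K) :
    ∃ c : ℕ, ∀ (D : List ℤ) (T : TT), Optimal K D T →
      height T ≤ 2 * Nat.log 2 D.length + c := by
  refine ⟨2, fun D T hOpt => ?_⟩
  obtain ⟨hf, hopt⟩ := hOpt
  have hl : LocOpt K T := fun T' h' => hopt T' (by rw [h', hf])
  rw [← hf]
  exact (main_bound K hK T hl).1
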